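/- arXiv:0704.1690 — 3 statements merged into one kernel-verified Lean document; each statement's English description precedes it below -/
import Mathlib

section
/- Let g_1,...,g_k be homogeneous polynomials of degrees d_i ≥ 1 in C[z_1,...,z_n], and let S be the space of polynomial solutions u ∈ C[z_1,...,z_n] of the system g_i(D)u = 0 for all i. Then S is finite-dimensional over C if and only if the g_i have no common zero in C^n other than the origin. -/
open MvPolynomial

/-- The iterated partial derivative `∂^{|s|}/∂z^s` as a linear endomorphism. -/
noncomputable def mderivL {n : ℕ} (s : Fin n → ℕ) : Module.End ℂ (MvPolynomial (Fin n) ℂ) :=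
  (List.finRange n).foldr
    (fun i acc => ((MvPolynomial.pderiv (R := ℂ) i).toLinearMap) ^ (s i) * acc) 1

/-- The differential operator `f(D)` (substitute `∂/∂z_i` for `z_i` in `f`) as a linear
endomorphism of the polynomial ring. -/
noncomputable def applyDL {n : ℕ} (f : MvPolynomial (Fin n) ℂ) :
    Module.End ℂ (MvPolynomial (Fin n) ℂ) :=
  (AddMonoidAlgebra.coeff f).sum fun s c => c • mderivL (fun i => s i)

namespace SolProof

variable {n k : ℕ}

noncomputable abbrev P (i : Fin n) : Module.End ℂ (MvPolynomial (Fin n) ℂ) :=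
  (MvPolynomial.pderiv (R := ℂ) i).toLinearMap

/-- foldr form of iterated derivatives over an arbitrary list. -/
noncomputable def F (l : List (Fin n)) (s : Fin n → ℕ) : Module.End ℂ (MvPolynomial (Fin n) ℂ) :=
  l.foldr (fun i acc => P i ^ (s i) * acc) 1

lemma mderivL_eq (s : Fin n → ℕ) : mderivL s = F (List.finRange n) s := rfl

lemma F_nil (s : Fin n → ℕ) : F [] s = 1 := rfl

lemma F_cons (i : Fin n) (l : List (Fin n)) (s : Fin n → ℕ) :
    F (i :: l) s = P i ^ (s i) * F l s := rfl

lemma pderiv_comm' (i j : Fin n) (f : MvPolynomial (Fin n) ℂ) :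
    pderiv i (pderiv j f) = pderiv j (pderiv i f) := by
  induction f using MvPolynomial.induction_on' with
  | add p q hp hq => simp only [map_add, hp, hq]
  | monomial s a =>
    rcases eq_or_ne i j with rfl | hij
    · rfl
    · simp only [pderiv_monomial, Finsupp.coe_tsub, Pi.sub_apply, Finsupp.single_apply,
        if_neg hij, if_neg hij.symm, Nat.sub_zero, tsub_right_comm]
      congr 1
      ring

lemma commute_P (i j : Fin n) : Commute (P i) (P j) :=
  LinearMap.ext fun f => pderiv_comm' i j f

lemma commute_pow_F (i : Fin n) (a : ℕ) (l : List (Fin n)) (s : Fin n → ℕ) :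
    Commute (P i ^ a) (F l s) := by
  induction l with
  | nil => exact Commute.one_right _
  | cons j l ih => exact Commute.mul_right ((commute_P i j).pow_pow a (s j)) ih

lemma F_add (l : List (Fin n)) (s t : Fin n → ℕ) :
    F l (s + t) = F l s * F l t := by
  induction l with
  | nil => simp [F_nil]
  | cons i l ih =>
    rw [F_cons, F_cons, F_cons, ih, Pi.add_apply, pow_add,
      Commute.mul_mul_mul_comm (commute_pow_F i (t i) l s)]

lemma F_single (l : List (Fin n)) (hl : l.Nodup) (j : Fin n) (t : ℕ) :
    F l (fun i => if j = i then t else 0) = if j ∈ l then P j ^ t else 1 := by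
  induction l with
  | nil => simp [F_nil]
  | cons i l ih =>
    rw [List.nodup_cons] at hl
    rw [F_cons]
    rcases eq_or_ne j i with rfl | hij
    · rw [if_pos rfl, ih hl.2, if_neg hl.1, mul_one, if_pos List.mem_cons_self]
    · rw [if_neg hij, pow_zero, one_mul, ih hl.2]
      simp [List.mem_cons, hij]

lemma applyDL_monomial (s : Fin n →₀ ℕ) (c : ℂ) :
    applyDL (monomial s c) = c • mderivL (fun i => s i) := by
  unfold applyDL
  rw [sum_monomial_eq]
  rw [zero_smul]

lemma applyDL_add (f g : MvPolynomial (Fin n) ℂ) :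
    applyDL (f + g) = applyDL f + applyDL g := by
  unfold applyDL
  exact Finsupp.sum_add_index' (fun a => zero_smul _ _) (fun a b₁ b₂ => add_smul _ _ _)

/-- `applyDL` as an additive monoid hom. -/
noncomputable def applyDLa : MvPolynomial (Fin n) ℂ →+ Module.End ℂ (MvPolynomial (Fin n) ℂ) :=
  AddMonoidHom.mk' applyDL applyDL_add

lemma applyDL_mul (f g : MvPolynomial (Fin n) ℂ) :
    applyDL (f * g) = applyDL f * applyDL g := by
  induction f using MvPolynomial.induction_on' with
  | add p q hp hq => rw [add_mul, applyDL_add, applyDL_add, hp, hq, add_mul]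
  | monomial s c =>
    induction g using MvPolynomial.induction_on' with
    | add p q hp hq => rw [mul_add, applyDL_add, applyDL_add, hp, hq, mul_add]
    | monomial t a =>
      rw [monomial_mul, applyDL_monomial, applyDL_monomial, applyDL_monomial]
      have hst : (fun i => (s + t) i) = (fun i => s i) + (fun i => t i) := by
        funext i; simp
      rw [hst, mderivL_eq, mderivL_eq, mderivL_eq, F_add, smul_mul_smul_comm]

lemma applyDL_X_pow (j : Fin n) (N : ℕ) :
    applyDL ((X j : MvPolynomial (Fin n) ℂ) ^ N) = P j ^ N := by
  rw [X_pow_eq_monomial, applyDL_monomial, one_smul, mderivL_eq]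
  have h : (fun i => (Finsupp.single j N) i) = fun i => if j = i then N else 0 := by
    funext i; rw [Finsupp.single_apply]
  rw [h, F_single _ (List.nodup_finRange n) j N, if_pos (List.mem_finRange j)]


lemma coeff_pderiv (j : Fin n) (u : MvPolynomial (Fin n) ℂ) (s : Fin n →₀ ℕ) :
    coeff s (pderiv j u) = ((s j : ℂ) + 1) * coeff (s + Finsupp.single j 1) u := by
  induction u using MvPolynomial.induction_on' with
  | add p q hp hq => simp only [map_add, coeff_add, hp, hq]; ring
  | monomial t a =>
    rw [pderiv_monomial, coeff_monomial, coeff_monomial]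
    by_cases h2 : t = s + Finsupp.single j 1
    · have h1 : t - Finsupp.single j 1 = s := by
        rw [h2]; exact add_tsub_cancel_right _ _
      have htj : t j = s j + 1 := by
        rw [h2, Finsupp.add_apply, Finsupp.single_eq_same]
      rw [if_pos h1, if_pos h2, htj]
      push_cast
      ring
    · rw [if_neg h2, mul_zero]
      by_cases h3 : t - Finsupp.single j 1 = s
      · rw [if_pos h3]
        have htj : t j = 0 := by
          by_contra h4
          apply h2
          ext i
          rcases eq_or_ne i j with rfl | hij
          · have := congrArg (fun f => f i) h3
            simp only [Finsupp.coe_tsub, Pi.sub_apply, Finsupp.single_eq_same] at this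
            rw [Finsupp.add_apply, Finsupp.single_eq_same]
            omega
          · have := congrArg (fun f => f i) h3
            simp only [Finsupp.coe_tsub, Pi.sub_apply,
              Finsupp.single_eq_of_ne' (Ne.symm hij), Nat.sub_zero] at this
            rw [Finsupp.add_apply, Finsupp.single_eq_of_ne' (Ne.symm hij)]
            omega
        rw [htj]
        simp
      · rw [if_neg h3]

lemma coeff_P_pow (j : Fin n) (N : ℕ) (u : MvPolynomial (Fin n) ℂ) (s : Fin n →₀ ℕ) :
    coeff s ((P j ^ N) u) =
      ((s j + N).descFactorial N : ℂ) * coeff (s + Finsupp.single j N) u := by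
  induction N generalizing u with
  | zero => simp
  | succ N ih =>
    rw [pow_succ, Module.End.mul_apply]
    have hP : (P j) u = pderiv j u := rfl
    rw [hP, ih (pderiv j u), coeff_pderiv]
    have h1 : (s + Finsupp.single j N) j = s j + N := by
      rw [Finsupp.add_apply, Finsupp.single_eq_same]
    have h2 : s + Finsupp.single j N + Finsupp.single j 1 = s + Finsupp.single j (N + 1) := by
      rw [add_assoc, ← Finsupp.single_add]
    rw [h1, h2]
    have h3 : ((s j + (N + 1)).descFactorial (N + 1) : ℕ)
        = (s j + N + 1) * (s j + N).descFactorial N :=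
      Nat.succ_descFactorial_succ (s j + N) N
    rw [h3]
    push_cast
    ring

lemma coeff_eq_zero_of_P_pow (j : Fin n) (N : ℕ) (u : MvPolynomial (Fin n) ℂ)
    (h : (P j ^ N) u = 0) (t : Fin n →₀ ℕ) (ht : N ≤ t j) : coeff t u = 0 := by
  have key := coeff_P_pow j N u (t - Finsupp.single j N)
  rw [h, coeff_zero] at key
  have hts : t - Finsupp.single j N + Finsupp.single j N = t := by
    ext i
    rcases eq_or_ne i j with rfl | hij
    · simp only [Finsupp.add_apply, Finsupp.coe_tsub, Pi.sub_apply, Finsupp.single_eq_same]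
      omega
    · simp only [Finsupp.add_apply, Finsupp.coe_tsub, Pi.sub_apply,
        Finsupp.single_eq_of_ne' (Ne.symm hij)]
      omega
  rw [hts] at key
  have hc : (((t - Finsupp.single j N) j + N).descFactorial N : ℂ) ≠ 0 := by
    rw [Nat.cast_ne_zero]
    intro h0
    rw [Nat.descFactorial_eq_zero_iff_lt] at h0
    omega
  exact (mul_eq_zero.mp key.symm).resolve_left hc


lemma finite_of_no_common_zero (g : Fin k → MvPolynomial (Fin n) ℂ)
    (h : ∀ w : Fin n → ℂ, (∀ i, MvPolynomial.eval w (g i) = 0) → w = 0) :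
    FiniteDimensional ℂ ↥(⨅ i, LinearMap.ker (applyDL (g i))) := by
  classical
  set I : Ideal (MvPolynomial (Fin n) ℂ) := Ideal.span (Set.range g) with hI
  have hX : ∀ j : Fin n, ∃ N : ℕ, (X j : MvPolynomial (Fin n) ℂ) ^ N ∈ I := by
    intro j
    have hrad : (X j : MvPolynomial (Fin n) ℂ) ∈ I.radical := by
      rw [← vanishingIdeal_zeroLocus_eq_radical (K := ℂ), mem_vanishingIdeal_iff]
      intro x hx
      have hx0 : x = 0 := by
        apply h
        intro i
        exact hx (g i) (Ideal.subset_span ⟨i, rfl⟩)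
      rw [hx0, aeval_X]
      rfl
    exact hrad
  choose N hN using hX
  set M : ℕ := (Finset.univ.sup N) + 1 with hM
  have hXM : ∀ j : Fin n, (X j : MvPolynomial (Fin n) ℂ) ^ M ∈ I := by
    intro j
    have hle : N j ≤ M := le_trans (Finset.le_sup (Finset.mem_univ j)) (Nat.le_succ _)
    have : (X j : MvPolynomial (Fin n) ℂ) ^ M
        = (X j) ^ (M - N j) * (X j) ^ (N j) := by
      rw [← pow_add, Nat.sub_add_cancel hle]
    rw [this]
    exact Ideal.mul_mem_left _ _ (hN j)
  -- every element of the solution space lies in a finite-dimensional submodule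
  set T : Submodule ℂ (MvPolynomial (Fin n) ℂ) :=
    MvPolynomial.restrictSupport ℂ {s : Fin n →₀ ℕ | ∀ j, s j < M} with hT
  have hle : (⨅ i, LinearMap.ker (applyDL (g i))) ≤ T := by
    intro u hu
    have hu' : ∀ i, applyDL (g i) u = 0 := by
      intro i
      have := (Submodule.mem_iInf _).mp hu i
      exact LinearMap.mem_ker.mp this
    have hP : ∀ j : Fin n, (P j ^ M) u = 0 := by
      intro j
      obtain ⟨c, hc⟩ := Ideal.mem_span_range_iff_exists_fun.mp (hXM j)
      have h1 : applyDL ((X j : MvPolynomial (Fin n) ℂ) ^ M) u = 0 := by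
        rw [← hc]
        have h2 : applyDL (∑ i, c i * g i) = ∑ i, applyDL (c i * g i) :=
          map_sum (applyDLa (n := n)) _ _
        rw [h2, LinearMap.sum_apply]
        apply Finset.sum_eq_zero
        intro i _
        rw [applyDL_mul, Module.End.mul_apply, hu' i, map_zero]
      rw [applyDL_X_pow] at h1
      exact h1
    rw [hT, MvPolynomial.restrictSupport, AddMonoidAlgebra.mem_supported]
    intro s hs
    intro j
    by_contra hlt
    push_neg at hlt
    have := coeff_eq_zero_of_P_pow j M u (hP j) s hlt
    exact Finsupp.mem_support_iff.mp hs this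
  have hfin : ({s : Fin n →₀ ℕ | ∀ j, s j < M} : Set (Fin n →₀ ℕ)).Finite := by
    have h2 : ({f : Fin n → ℕ | ∀ j, f j < M} : Set (Fin n → ℕ)).Finite := by
      have : ({f : Fin n → ℕ | ∀ j, f j < M} : Set (Fin n → ℕ))
          = Set.pi Set.univ (fun _ => Set.Iio M) := by
        ext f; simp [Set.mem_pi]
      rw [this]
      exact Set.Finite.pi fun _ => Set.finite_Iio M
    have h3 : ({s : Fin n →₀ ℕ | ∀ j, s j < M} : Set (Fin n →₀ ℕ))
        = (fun s : Fin n →₀ ℕ => (s : Fin n → ℕ)) ⁻¹' {f : Fin n → ℕ | ∀ j, f j < M} := rfl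
    rw [h3]
    exact Set.Finite.preimage (Set.injOn_of_injective ((DFunLike.coe_injective (F := Fin n →₀ ℕ)))) h2
  haveI : Finite ↥({s : Fin n →₀ ℕ | ∀ j, s j < M} : Set (Fin n →₀ ℕ)) := hfin
  haveI : FiniteDimensional ℂ ↥T :=
    Module.Finite.of_basis (MvPolynomial.basisRestrictSupport ℂ _)
  exact Submodule.finiteDimensional_of_le hle


lemma descFactorial_add'' (m a b : ℕ) :
    m.descFactorial (a + b) = m.descFactorial a * (m - a).descFactorial b := by
  induction b with
  | zero => simp
  | succ b ih =>
    have h1 : a + (b + 1) = (a + b) + 1 := by omega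
    rw [h1, Nat.descFactorial_succ, ih, Nat.descFactorial_succ, Nat.sub_sub]
    ring

/-- the linear form with coefficients `w`. -/
noncomputable def Lw (w : Fin n → ℂ) : MvPolynomial (Fin n) ℂ := ∑ j, C (w j) * X j

variable (w : Fin n → ℂ)

lemma pderiv_Lw (i : Fin n) : pderiv i (Lw w) = C (w i) := by
  unfold Lw
  rw [map_sum, Finset.sum_eq_single i]
  · rw [pderiv_C_mul, pderiv_X_self, mul_one]
  · intro j _ hji
    rw [pderiv_C_mul, pderiv_X_of_ne hji, mul_zero]
  · intro hi
    exact absurd (Finset.mem_univ i) hi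

lemma Ppow_C_mul_Lw_pow (i : Fin n) (t : ℕ) (c : ℂ) (m : ℕ) :
    (P i ^ t) (C c * Lw w ^ m) =
      ((m.descFactorial t : ℂ)) • (C (c * w i ^ t) * Lw w ^ (m - t)) := by
  induction t with
  | zero => simp
  | succ t ih =>
    rw [pow_succ', Module.End.mul_apply, ih, map_smul]
    have h1 : P i (C (c * w i ^ t) * Lw w ^ (m - t))
        = C (c * w i ^ t) * (((m - t : ℕ) : MvPolynomial (Fin n) ℂ)
            * Lw w ^ (m - t - 1) * C (w i)) := by
      show pderiv i _ = _
      rw [pderiv_C_mul, pderiv_pow, pderiv_Lw]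
    rw [h1]
    have h2 : m - t - 1 = m - (t + 1) := by omega
    have h3 : ((m - t : ℕ) : MvPolynomial (Fin n) ℂ) = C ((m - t : ℕ) : ℂ) := by
      simp
    rw [h2, h3, smul_eq_C_mul, smul_eq_C_mul, Nat.descFactorial_succ]
    push_cast
    simp only [map_mul, map_pow]
    ring

lemma F_C_mul_Lw_pow (l : List (Fin n)) (s : Fin n → ℕ) (c : ℂ) (m : ℕ) :
    F l s (C c * Lw w ^ m) = ((m.descFactorial ((l.map s).sum) : ℂ)) •
      (C (c * (l.map fun i => w i ^ s i).prod) * Lw w ^ (m - (l.map s).sum)) := by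
  induction l generalizing c with
  | nil => simp [F_nil]
  | cons i l ih =>
    rw [F_cons, Module.End.mul_apply, ih, map_smul, Ppow_C_mul_Lw_pow]
    rw [List.map_cons, List.sum_cons, List.map_cons, List.prod_cons, smul_smul]
    have h4 : m.descFactorial (s i + (l.map s).sum)
        = m.descFactorial ((l.map s).sum) * (m - (l.map s).sum).descFactorial (s i) := by
      rw [add_comm]
      exact descFactorial_add'' m _ _
    have h5 : m - (l.map s).sum - s i = m - (s i + (l.map s).sum) := by omega
    rw [h4, h5, smul_eq_C_mul, smul_eq_C_mul]
    push_cast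
    simp only [map_mul, map_pow]
    ring

lemma mderivL_Lw_pow (s : Fin n →₀ ℕ) (m : ℕ) :
    mderivL (fun i => s i) (Lw w ^ m) = ((m.descFactorial (∑ i, s i) : ℂ)) •
      (C (∏ i, w i ^ s i) * Lw w ^ (m - ∑ i, s i)) := by
  have h0 : Lw w ^ m = C (1 : ℂ) * Lw w ^ m := by rw [map_one, one_mul]
  rw [mderivL_eq, h0, F_C_mul_Lw_pow]
  rw [Fin.sum_univ_def, Fin.prod_univ_def, one_mul]

lemma applyDL_Lw_pow_eq_zero (g : MvPolynomial (Fin n) ℂ) (dd : ℕ)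
    (hg : g.IsHomogeneous dd) (hw : MvPolynomial.eval w g = 0) (m : ℕ) :
    applyDL g (Lw w ^ m) = 0 := by
  have happ : applyDL g = ∑ s ∈ g.support, coeff s g • mderivL (fun i => s i) := by
    unfold applyDL; exact sum_def
  have hdeg : ∀ s ∈ g.support, (∑ i, (s : Fin n →₀ ℕ) i) = dd := by
    intro s hs
    have h1 := hg (MvPolynomial.mem_support_iff.mp hs)
    rw [Finsupp.weight_apply] at h1
    rw [← h1, Finsupp.sum_fintype]
    · simp
    · intro i
      simp
  rw [happ, LinearMap.sum_apply]
  have hterm : ∀ s ∈ g.support,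
      (coeff s g • mderivL (fun i => (s : Fin n →₀ ℕ) i)) (Lw w ^ m)
        = ((m.descFactorial dd : ℂ) * (coeff s g * ∏ i, w i ^ s i)) • Lw w ^ (m - dd) := by
    intro s hs
    rw [LinearMap.smul_apply, mderivL_Lw_pow, hdeg s hs, ← smul_eq_C_mul,
      smul_smul, smul_smul]
    congr 1
    ring
  rw [Finset.sum_congr rfl hterm, ← Finset.sum_smul, ← Finset.mul_sum, ← eval_eq', hw,
    mul_zero, zero_smul]

lemma linIndep_CX_pow {cc : ℂ} (h : cc ≠ 0) :
    LinearIndependent ℂ (fun m : ℕ => (Polynomial.C cc * Polynomial.X) ^ m) := by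
  rw [linearIndependent_iff']
  intro t gc hsum m hm
  have hco := congrArg (fun p => Polynomial.coeff p m) hsum
  simp only [Polynomial.finset_sum_coeff, mul_pow, ← Polynomial.C_pow,
    Polynomial.coeff_smul, Polynomial.coeff_C_mul, Polynomial.coeff_X_pow,
    smul_eq_mul, mul_ite, mul_one, mul_zero, Finset.sum_ite_eq, hm, if_pos,
    Polynomial.coeff_zero] at hco
  rcases mul_eq_zero.mp hco with h1 | h1
  · exact h1
  · exact absurd h1 (pow_ne_zero m h)

end SolProof

/-- The space of polynomial solutions of the system `g_i(D)u = 0` is finite-dimensional iff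
the `g_i` have no common zero other than the origin. -/
theorem solutions_finiteDimensional_iff_no_common_zero {n k : ℕ}
    (g : Fin k → MvPolynomial (Fin n) ℂ) (d : Fin k → ℕ) (hd : ∀ i, 1 ≤ d i)
    (hg : ∀ i, (g i).IsHomogeneous (d i)) :
    FiniteDimensional ℂ ↥(⨅ i, LinearMap.ker (applyDL (g i))) ↔
      ∀ w : Fin n → ℂ, (∀ i, MvPolynomial.eval w (g i) = 0) → w = 0 := by
  classical
  constructor
  · intro hfd w hw
    by_contra hw0
    obtain ⟨j0, hj0⟩ : ∃ j, w j ≠ 0 := by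
      by_contra hc
      push_neg at hc
      exact hw0 (funext hc)
    set S : Submodule ℂ (MvPolynomial (Fin n) ℂ) := ⨅ i, LinearMap.ker (applyDL (g i)) with hS
    have hmem : ∀ m : ℕ, SolProof.Lw w ^ m ∈ S := by
      intro m
      rw [hS, Submodule.mem_iInf]
      intro i
      rw [LinearMap.mem_ker]
      exact SolProof.applyDL_Lw_pow_eq_zero w (g i) (d i) (hg i) (hw i) m
    set cc : ℂ := ∑ j, w j * (starRingEnd ℂ) (w j) with hcc
    have hccne : cc ≠ 0 := by
      rw [hcc]
      have h1 : ∀ j : Fin n, w j * (starRingEnd ℂ) (w j) = ((Complex.normSq (w j) : ℝ) : ℂ) := by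
        intro j
        rw [Complex.mul_conj]
      rw [Finset.sum_congr rfl fun j _ => h1 j, ← Complex.ofReal_sum]
      rw [Complex.ofReal_ne_zero]
      have hpos : 0 < ∑ j, Complex.normSq (w j) :=
        Finset.sum_pos' (fun j _ => Complex.normSq_nonneg _)
          ⟨j0, Finset.mem_univ j0, Complex.normSq_pos.mpr hj0⟩
      exact ne_of_gt hpos
    set φ : MvPolynomial (Fin n) ℂ →ₐ[ℂ] Polynomial ℂ :=
      MvPolynomial.aeval (fun i => Polynomial.C ((starRingEnd ℂ) (w i)) * Polynomial.X) with hφ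
    have hφL : φ (SolProof.Lw w) = Polynomial.C cc * Polynomial.X := by
      rw [SolProof.Lw, map_sum, hcc, map_sum, Finset.sum_mul]
      refine Finset.sum_congr rfl fun j _ => ?_
      rw [map_mul, hφ, aeval_C, aeval_X, Polynomial.algebraMap_eq, map_mul]
      ring
    have hLind : LinearIndependent ℂ (fun m : ℕ => SolProof.Lw w ^ m) := by
      apply LinearIndependent.of_comp φ.toLinearMap
      have he : (φ.toLinearMap ∘ fun m : ℕ => SolProof.Lw w ^ m)
          = fun m : ℕ => (Polynomial.C cc * Polynomial.X) ^ m := by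
        funext m
        simp only [Function.comp_apply, AlgHom.toLinearMap_apply, map_pow, hφL]
      rw [he]
      exact SolProof.linIndep_CX_pow hccne
    have hvind : LinearIndependent ℂ (fun m : ℕ => (⟨SolProof.Lw w ^ m, hmem m⟩ : S)) := by
      apply LinearIndependent.of_comp S.subtype
      exact hLind
    haveI : Finite ℕ := hvind.finite
    exact not_finite ℕ
  · exact SolProof.finite_of_no_common_zero g
end

section
/- Let P be a homogeneous polynomial of degree d ≥ 3 in C[z_1,...,z_n], and suppose: (a) every polynomial of the form Δ^m P^{m+1} (m ≥ 0) satisfies the system of PDEs (∂P/∂z_i)(D)u = 0 for i = 1,...,n and Δu = 0; and (b) the polynomials ∂P/∂z_1, ..., ∂P/∂z_n and σ_2(z) = Σ z_i² have no common zero other than the origin. Then Δ^m P^{m+1} = 0 for all sufficiently large m. -/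
open MvPolynomial

/-- The iterated partial derivative `∂^{|s|}/∂z^s` given by the multi-index `s`. -/
noncomputable def mderiv {n : ℕ} (s : Fin n → ℕ) (g : MvPolynomial (Fin n) ℂ) :
    MvPolynomial (Fin n) ℂ :=
  (List.finRange n).foldr (fun i acc => (fun p => MvPolynomial.pderiv i p)^[s i] acc) g

/-- The differential operator `f(D)` applied to `g`: substitute `∂/∂z_i` for `z_i` in `f`. -/
noncomputable def applyD {n : ℕ} (f g : MvPolynomial (Fin n) ℂ) : MvPolynomial (Fin n) ℂ :=
  (AddMonoidAlgebra.coeff f).sum fun s c => c • mderiv (fun i => s i) g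


/-- The Laplace operator `Δ = ∑ ∂²/∂z_i²`. -/
noncomputable def lap {n : ℕ} (g : MvPolynomial (Fin n) ℂ) : MvPolynomial (Fin n) ℂ :=
  ∑ i, MvPolynomial.pderiv i (MvPolynomial.pderiv i g)

noncomputable section VFDSAux

namespace VFDS

variable {n : ℕ}

lemma pderiv_pderiv_comm (i j : Fin n) (f : MvPolynomial (Fin n) ℂ) :
    pderiv i (pderiv j f) = pderiv j (pderiv i f) := by
  induction f using MvPolynomial.induction_on' with
  | add p q hp hq => simp only [map_add, hp, hq]
  | monomial s a =>
    rcases eq_or_ne i j with rfl | hij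
    · rfl
    · simp only [pderiv_monomial, Finsupp.tsub_apply,
        Finsupp.single_apply, if_neg hij, if_neg (Ne.symm hij), Nat.sub_zero]
      rw [tsub_right_comm]
      ring_nf

/-- `∂/∂z_i` as a linear endomorphism. -/
def DD (i : Fin n) : Module.End ℂ (MvPolynomial (Fin n) ℂ) :=
  (pderiv i).toLinearMap

lemma DD_apply (i : Fin n) (p : MvPolynomial (Fin n) ℂ) : DD i p = pderiv i p := rfl

lemma commDD (i j : Fin n) : Commute (DD i) (DD j) := by
  apply LinearMap.ext
  intro p
  simpa [DD, Module.End.mul_apply] using pderiv_pderiv_comm i j p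

/-- The operator `∏_{i ∈ l} ∂^{s i}/∂z_i^{s i}`. -/
def Efold (s : Fin n → ℕ) (l : List (Fin n)) : Module.End ℂ (MvPolynomial (Fin n) ℂ) :=
  l.foldr (fun i acc => DD i ^ s i * acc) 1

lemma Efold_nil (s : Fin n → ℕ) : Efold s [] = 1 := rfl

lemma Efold_cons (s : Fin n → ℕ) (i : Fin n) (l : List (Fin n)) :
    Efold s (i :: l) = DD i ^ s i * Efold s l := rfl

lemma commE (s : Fin n → ℕ) (l : List (Fin n)) (j : Fin n) (k : ℕ) :
    Commute (DD j ^ k) (Efold s l) := by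
  induction l with
  | nil => exact Commute.one_right _
  | cons i l ih => exact (Commute.pow_pow (commDD j i) k (s i)).mul_right ih

lemma Efold_add (s t : Fin n → ℕ) (l : List (Fin n)) :
    Efold (fun i => s i + t i) l = Efold s l * Efold t l := by
  induction l with
  | nil => simp [Efold_nil]
  | cons i l ih =>
    rw [Efold_cons, Efold_cons, Efold_cons, ih, pow_add]
    rw [mul_assoc, mul_assoc, ← mul_assoc (DD i ^ t i), (commE s l i (t i)).eq, mul_assoc]

lemma mderiv_eq_Efold (s : Fin n → ℕ) (g : MvPolynomial (Fin n) ℂ) :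
    mderiv s g = Efold s (List.finRange n) g := by
  unfold mderiv
  induction List.finRange n with
  | nil => rfl
  | cons i l ih =>
    rw [List.foldr_cons, ih, Efold_cons, Module.End.mul_apply, Module.End.pow_apply]
    rfl

lemma mderiv_zero_right (s : Fin n → ℕ) : mderiv s (0 : MvPolynomial (Fin n) ℂ) = 0 := by
  rw [mderiv_eq_Efold]; exact map_zero _

lemma applyD_monomial (s : Fin n →₀ ℕ) (a : ℂ) (g : MvPolynomial (Fin n) ℂ) :
    applyD (monomial s a) g = a • mderiv (fun i => s i) g := by
  rw [applyD, ← single_eq_monomial, AddMonoidAlgebra.coeff_single, Finsupp.sum_single_index]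
  simp

lemma applyD_zero_left (g : MvPolynomial (Fin n) ℂ) : applyD 0 g = 0 := by
  rw [applyD, AddMonoidAlgebra.coeff_zero]; exact Finsupp.sum_zero_index

lemma applyD_zero_right (f : MvPolynomial (Fin n) ℂ) : applyD f 0 = 0 := by
  rw [applyD]
  simp only [mderiv_zero_right, smul_zero]
  exact Finset.sum_const_zero

lemma applyD_add_left (f g u : MvPolynomial (Fin n) ℂ) :
    applyD (f + g) u = applyD f u + applyD g u := by
  unfold applyD
  rw [AddMonoidAlgebra.coeff_add]
  exact Finsupp.sum_add_index' (fun s => by simp) (fun s b c => add_smul b c _)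

lemma applyD_add_right (f x y : MvPolynomial (Fin n) ℂ) :
    applyD f (x + y) = applyD f x + applyD f y := by
  unfold applyD
  simp only [mderiv_eq_Efold, map_add, smul_add]
  exact Finsupp.sum_add

lemma applyD_mul (f g u : MvPolynomial (Fin n) ℂ) :
    applyD (f * g) u = applyD f (applyD g u) := by
  induction f using MvPolynomial.induction_on' with
  | add p q hp hq => rw [add_mul, applyD_add_left, hp, hq, applyD_add_left]
  | monomial s a =>
    induction g using MvPolynomial.induction_on' with
    | add p q hp hq => rw [mul_add, applyD_add_left, hp, hq, ← applyD_add_right, applyD_add_left]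
    | monomial t b =>
      rw [monomial_mul, applyD_monomial, applyD_monomial, applyD_monomial]
      have hfun : (fun i => (s + t) i) = fun i => s i + t i := by
        funext i; simp
      rw [hfun]
      simp only [mderiv_eq_Efold]
      rw [Efold_add, Module.End.mul_apply, map_smul, smul_smul]

lemma Efold_of_forall_zero (s : Fin n → ℕ) (l : List (Fin n))
    (h : ∀ j ∈ l, s j = 0) : Efold s l = 1 := by
  induction l with
  | nil => rfl
  | cons i l ih =>
    rw [Efold_cons, h i (List.mem_cons_self), pow_zero, one_mul]
    exact ih fun j hj => h j (List.mem_cons_of_mem i hj)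

lemma Efold_single (i : Fin n) (k : ℕ) (l : List (Fin n)) (hl : l.Nodup) (hi : i ∈ l) :
    Efold (fun j => (Finsupp.single i k) j) l = DD i ^ k := by
  induction l with
  | nil => simp at hi
  | cons j l ih =>
    rw [List.nodup_cons] at hl
    rw [Efold_cons]
    rcases eq_or_ne i j with rfl | hij
    · rw [Efold_of_forall_zero _ _ (fun m hm => ?_)]
      · simp
      · exact Finsupp.single_eq_of_ne' (fun h => hl.1 (h ▸ hm))
    · have hil : i ∈ l := by
        rcases List.mem_cons.mp hi with h | h
        · exact absurd h hij
        · exact h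
      rw [ih hl.2 hil, Finsupp.single_eq_of_ne' hij, pow_zero, one_mul]

lemma applyD_X_pow_two (i : Fin n) (u : MvPolynomial (Fin n) ℂ) :
    applyD (X i ^ 2) u = pderiv i (pderiv i u) := by
  rw [X_pow_eq_monomial, applyD_monomial, one_smul, mderiv_eq_Efold,
    Efold_single i 2 _ (List.nodup_finRange n) (List.mem_finRange i)]
  rw [pow_two, Module.End.mul_apply]
  rfl

lemma lap_eq_applyD (u : MvPolynomial (Fin n) ℂ) :
    lap u = applyD (∑ i, (X i : MvPolynomial (Fin n) ℂ) ^ 2) u := by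
  rw [lap]
  induction (Finset.univ : Finset (Fin n)) using Finset.cons_induction with
  | empty => simp [applyD_zero_left]
  | cons i sfin hi ih =>
    rw [Finset.sum_cons, Finset.sum_cons, applyD_add_left, ih, applyD_X_pow_two]

lemma DD_pow_monomial (i : Fin n) (k : ℕ) (t : Fin n →₀ ℕ) (a : ℂ) :
    (DD i ^ k) (monomial t a) =
      monomial (t - Finsupp.single i k) (a * ((t i).descFactorial k : ℕ)) := by
  induction k with
  | zero => simp
  | succ k ih =>
    rw [pow_succ', Module.End.mul_apply, ih, DD_apply, pderiv_monomial]
    congr 1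
    · rw [tsub_tsub, ← Finsupp.single_add]
    · rw [Finsupp.tsub_apply, Finsupp.single_eq_same, Nat.descFactorial_succ]
      push_cast
      ring

lemma list_sum_single_apply (s : Fin n → ℕ) (l : List (Fin n)) (hl : l.Nodup) (j : Fin n) :
    ((l.map fun i => Finsupp.single i (s i)).sum) j = if j ∈ l then s j else 0 := by
  induction l with
  | nil => simp
  | cons i l ih =>
    rw [List.nodup_cons] at hl
    rw [List.map_cons, List.sum_cons, Finsupp.add_apply, ih hl.2]
    rcases eq_or_ne j i with rfl | hj
    · rw [if_neg hl.1, Finsupp.single_eq_same, if_pos (List.mem_cons_self), add_zero]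
    · rw [Finsupp.single_eq_of_ne' (Ne.symm hj)]
      by_cases hjl : j ∈ l
      · simp [hjl, List.mem_cons_of_mem i hjl]
      · simp [hjl, List.mem_cons, hj]

lemma Efold_monomial (s : Fin n → ℕ) (l : List (Fin n)) (hl : l.Nodup) (t : Fin n →₀ ℕ) (a : ℂ) :
    Efold s l (monomial t a) =
      monomial (t - (l.map fun i => Finsupp.single i (s i)).sum)
        (a * (((l.map fun i => (t i).descFactorial (s i)).prod : ℕ) : ℂ)) := by
  induction l with
  | nil => simp [Efold_nil]
  | cons i l ih =>
    rw [List.nodup_cons] at hl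
    rw [Efold_cons, Module.End.mul_apply, ih hl.2, DD_pow_monomial]
    have hti : (t - (l.map fun i => Finsupp.single i (s i)).sum) i = t i := by
      rw [Finsupp.tsub_apply, list_sum_single_apply s l hl.2, if_neg hl.1, Nat.sub_zero]
    rw [hti]
    congr 1
    · rw [List.map_cons, List.sum_cons, tsub_tsub, add_comm]
    · rw [List.map_cons, List.prod_cons]
      push_cast
      ring

lemma coeff_zero_mderiv_monomial (σ : Fin n →₀ ℕ) (τ : Fin n →₀ ℕ) (a : ℂ) :
    coeff 0 (mderiv (fun i => σ i) (monomial τ a)) =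
      if τ = σ then (((List.finRange n).map fun i => (σ i).factorial).prod : ℕ) * a else 0 := by
  rw [mderiv_eq_Efold, Efold_monomial _ _ (List.nodup_finRange n)]
  have hsum : ((List.finRange n).map fun i => Finsupp.single i (σ i)).sum = σ := by
    ext j
    rw [list_sum_single_apply _ _ (List.nodup_finRange n), if_pos (List.mem_finRange j)]
  rw [hsum]
  rcases eq_or_ne τ σ with rfl | hτσ
  · rw [if_pos rfl, tsub_self, coeff_monomial, if_pos rfl]
    rw [mul_comm]
    congr 2
    exact congrArg List.prod (List.map_congr_left fun i _ => Nat.descFactorial_self (τ i))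
  · rw [if_neg hτσ]
    by_cases hle : τ - σ = 0
    · have hle' : τ ≤ σ := tsub_eq_zero_iff_le.mp hle
      have : ¬ σ ≤ τ := fun h => hτσ (le_antisymm hle' h)
      rw [Finsupp.le_def] at this
      push_neg at this
      obtain ⟨i, hi⟩ := this
      have hz : ((List.finRange n).map fun i => (τ i).descFactorial (σ i)).prod = 0 := by
        apply List.prod_eq_zero
        refine List.mem_map.mpr ⟨i, List.mem_finRange i, ?_⟩
        exact Nat.descFactorial_eq_zero_iff_lt.mpr hi
      rw [hz]
      simp
    · rw [coeff_monomial, if_neg hle]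

lemma coeff_zero_mderiv (σ : Fin n →₀ ℕ) (u : MvPolynomial (Fin n) ℂ) :
    coeff 0 (mderiv (fun i => σ i) u) =
      (((List.finRange n).map fun i => (σ i).factorial).prod : ℕ) * coeff σ u := by
  conv_lhs => rw [u.as_sum]
  rw [mderiv_eq_Efold, map_sum, MvPolynomial.coeff_sum]
  rw [Finset.sum_congr rfl (fun τ _ => by
    rw [← mderiv_eq_Efold, coeff_zero_mderiv_monomial])]
  rw [Finset.sum_ite_eq' u.support σ]
  by_cases h : σ ∈ u.support
  · rw [if_pos h]
  · rw [if_neg h, MvPolynomial.notMem_support_iff.mp h, mul_zero]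

lemma isHomogeneous_pderiv {φ : MvPolynomial (Fin n) ℂ} {k : ℕ}
    (h : φ.IsHomogeneous k) (i : Fin n) : (pderiv i φ).IsHomogeneous (k - 1) := by
  conv_lhs => rw [φ.as_sum]
  rw [map_sum]
  apply MvPolynomial.IsHomogeneous.sum
  intro τ hτ
  rw [pderiv_monomial]
  by_cases hi : τ i = 0
  · rw [hi]
    push_cast
    rw [mul_zero, monomial_zero]
    exact isHomogeneous_zero _ _ _
  · apply isHomogeneous_monomial
    have hdeg : τ.degree = k := by
      have := h (MvPolynomial.mem_support_iff.mp hτ)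
      rw [Finsupp.degree_eq_weight_one]
      exact this
    have hsub : (τ - Finsupp.single i 1) + Finsupp.single i 1 = τ :=
      tsub_add_cancel_of_le (Finsupp.single_le_iff.mpr (Nat.one_le_iff_ne_zero.mpr hi))
    have hdd : (τ - Finsupp.single i 1).degree + (Finsupp.single i 1).degree = τ.degree := by
      simp only [Finsupp.degree_eq_weight_one]
      rw [← map_add, hsub]
    have hone : (Finsupp.single i 1).degree = 1 := by
      exact Finsupp.degree_single i 1
    omega

lemma isHomogeneous_lap {g : MvPolynomial (Fin n) ℂ} {k : ℕ}
    (h : g.IsHomogeneous k) : (lap g).IsHomogeneous (k - 2) := by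
  rw [lap]
  apply MvPolynomial.IsHomogeneous.sum
  intro i _
  have h2 := isHomogeneous_pderiv (isHomogeneous_pderiv h i) i
  have e : k - 1 - 1 = k - 2 := by omega
  exact e ▸ h2

lemma isHomogeneous_lap_iter {g : MvPolynomial (Fin n) ℂ} {k : ℕ}
    (h : g.IsHomogeneous k) (m : ℕ) : (lap^[m] g).IsHomogeneous (k - 2 * m) := by
  induction m with
  | zero => simpa using h
  | succ m ih =>
    rw [Function.iterate_succ_apply']
    have h2 := isHomogeneous_lap ih
    have e : k - 2 * m - 2 = k - 2 * (m + 1) := by omega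
    exact e ▸ h2

end VFDS

end VFDSAux

/-- If every `Δ^m P^{m+1}` solves the system `(∂P/∂z_i)(D)u = 0`, `Δu = 0`, and the partials
of `P` together with `σ₂ = ∑ z_i²` have no common zero besides the origin, then
`Δ^m P^{m+1} = 0` for all large `m`. -/
theorem vanishing_of_finite_dim_solutions {n d : ℕ} (hd : 3 ≤ d)
    (P : MvPolynomial (Fin n) ℂ) (hP : P.IsHomogeneous d)
    (ha : ∀ m : ℕ,
      (∀ i, applyD (MvPolynomial.pderiv i P) (lap^[m] (P ^ (m + 1))) = 0) ∧
      lap (lap^[m] (P ^ (m + 1))) = 0)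
    (hb : ∀ w : Fin n → ℂ,
      (∀ i, MvPolynomial.eval w (MvPolynomial.pderiv i P) = 0) → (∑ i, w i ^ 2) = 0 → w = 0) :
    ∃ N : ℕ, ∀ m > N, lap^[m] (P ^ (m + 1)) = 0 := by
  classical
  set σ₂ : MvPolynomial (Fin n) ℂ := ∑ i, X i ^ 2 with hσ₂
  set I : Ideal (MvPolynomial (Fin n) ℂ) :=
    Ideal.span ({σ₂} ∪ Set.range fun i => MvPolynomial.pderiv i P) with hI
  -- every element of I annihilates every u_m
  have hann : ∀ m : ℕ, ∀ f ∈ I, applyD f (lap^[m] (P ^ (m + 1))) = 0 := by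
    intro m f hf
    induction hf using Submodule.span_induction with
    | mem g hg =>
      rcases hg with hg | ⟨i, rfl⟩
      · rw [Set.mem_singleton_iff] at hg
        rw [hg, ← VFDS.lap_eq_applyD]
        exact (ha m).2
      · exact (ha m).1 i
    | zero => exact VFDS.applyD_zero_left _
    | add x y hx hy ihx ihy => rw [VFDS.applyD_add_left, ihx, ihy, add_zero]
    | smul r x hx ihx =>
      rw [smul_eq_mul, VFDS.applyD_mul, ihx, VFDS.applyD_zero_right]
  -- the zero locus of I is {0}
  have hzl : MvPolynomial.zeroLocus ℂ I ⊆ {0} := by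
    intro w hw
    have h1 : ∀ i, MvPolynomial.eval w (MvPolynomial.pderiv i P) = 0 := fun i =>
      hw _ (Ideal.subset_span (Or.inr ⟨i, rfl⟩))
    have h2 : MvPolynomial.eval w σ₂ = 0 := hw _ (Ideal.subset_span (Or.inl rfl))
    have h2' : (∑ i, w i ^ 2) = 0 := by
      rw [hσ₂] at h2
      simpa using h2
    exact hb w h1 h2'
  -- powers of variables lie in I
  have hX : ∀ i : Fin n, ∃ c : ℕ, (X i : MvPolynomial (Fin n) ℂ) ^ c ∈ I := by
    intro i
    have hrad : (X i : MvPolynomial (Fin n) ℂ) ∈ I.radical := by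
      rw [← MvPolynomial.vanishingIdeal_zeroLocus_eq_radical (K := ℂ)]
      intro x hx
      have : x = 0 := hzl hx
      rw [this]
      simp
    exact hrad
  choose c hc using hX
  set K : ℕ := Finset.univ.sup c with hK
  refine ⟨n * K, fun m hm => ?_⟩
  set u : MvPolynomial (Fin n) ℂ := lap^[m] (P ^ (m + 1)) with hu
  -- u is homogeneous of degree d*(m+1) - 2*m ≥ m + 3
  have hhom : u.IsHomogeneous (d * (m + 1) - 2 * m) :=
    VFDS.isHomogeneous_lap_iter (hP.pow (m + 1)) m
  have hdegbig : m + 3 ≤ d * (m + 1) - 2 * m := by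
    have h3 : 3 * (m + 1) ≤ d * (m + 1) := Nat.mul_le_mul_right _ hd
    omega
  -- conclude u = 0 coefficientwise
  ext τ
  rw [MvPolynomial.coeff_zero]
  by_contra hτ
  have hdeg : τ.degree = d * (m + 1) - 2 * m := by
    rw [Finsupp.degree_eq_weight_one]
    exact hhom hτ
  -- some exponent is large
  have hbig : ∃ i, K + 1 ≤ τ i := by
    by_contra hcon
    push_neg at hcon
    have hsum : τ.degree ≤ n * K := by
      calc τ.degree = ∑ i ∈ τ.support, τ i := rfl
        _ ≤ ∑ i : Fin n, τ i := Finset.sum_le_sum_of_subset (Finset.subset_univ _)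
        _ ≤ ∑ _i : Fin n, K := Finset.sum_le_sum fun i _ => Nat.lt_succ_iff.mp (hcon i)
        _ = n * K := by simp [Finset.sum_const, mul_comm]
    omega
  obtain ⟨i, hi⟩ := hbig
  have hci : c i ≤ τ i := le_trans (le_trans (Finset.le_sup (Finset.mem_univ i)) (Nat.le_succ K)) hi
  -- monomial τ 1 ∈ I
  have hmono : (MvPolynomial.monomial τ (1 : ℂ)) ∈ I := by
    have heq : (MvPolynomial.monomial (τ - Finsupp.single i (c i)) (1 : ℂ)) * (X i ^ c i)
        = MvPolynomial.monomial τ 1 := by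
      rw [MvPolynomial.X_pow_eq_monomial, MvPolynomial.monomial_mul, one_mul,
        tsub_add_cancel_of_le (Finsupp.single_le_iff.mpr hci)]
    rw [← heq]
    exact Ideal.mul_mem_left _ _ (hc i)
  -- extract the coefficient
  have h0 : applyD (MvPolynomial.monomial τ (1 : ℂ)) u = 0 := hann m _ hmono
  rw [VFDS.applyD_monomial, one_smul] at h0
  have hcoeff : MvPolynomial.coeff 0 (mderiv (fun j => τ j) u) = 0 := by
    rw [h0, MvPolynomial.coeff_zero]
  rw [VFDS.coeff_zero_mderiv] at hcoeff
  have hfac : (((List.finRange n).map fun j => (τ j).factorial).prod : ℕ) ≠ 0 := by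
    intro hzero
    have h0mem := List.prod_eq_zero_iff.mp hzero
    obtain ⟨j, _, hj⟩ := List.mem_map.mp h0mem
    exact (Nat.factorial_ne_zero (τ j)) hj
  have : MvPolynomial.coeff τ u = 0 := by
    rcases mul_eq_zero.mp hcoeff with h | h
    · exact absurd (Nat.cast_injective (h.trans (Nat.cast_zero).symm)) hfac
    · exact h
  exact hτ this
end

section
/- Let P ∈ C[z_1,...,z_n] be a polynomial such that Δ^m P^{m+a} = 0 for all sufficiently large m, uniformly for each fixed a ≥ 1 (i.e., for each a ≥ 1 there exists N_a with Δ^m P^{m+a} = 0 for m > N_a), and Δ^m P^m = 0 for all m ≥ 1. Then for any polynomial f of degree d there exists M such that Δ^m (f · P^m) = 0 for all m > M. -/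
open MvPolynomial

noncomputable def lapL {n : ℕ} : MvPolynomial (Fin n) ℂ →ₗ[ℂ] MvPolynomial (Fin n) ℂ :=
  ∑ i, ((pderiv i).toLinearMap ∘ₗ (pderiv i).toLinearMap)

lemma lapL_apply {n : ℕ} (g : MvPolynomial (Fin n) ℂ) : lapL g = lap g := by
  simp [lapL, lap]

noncomputable def pdL {n : ℕ} (L : List (Fin n)) :
    MvPolynomial (Fin n) ℂ →ₗ[ℂ] MvPolynomial (Fin n) ℂ :=
  L.foldr (fun i f => (pderiv i).toLinearMap ∘ₗ f) LinearMap.id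

@[simp] lemma pdL_nil {n : ℕ} (p : MvPolynomial (Fin n) ℂ) : pdL [] p = p := rfl

@[simp] lemma pdL_cons {n : ℕ} (i : Fin n) (L : List (Fin n)) (p : MvPolynomial (Fin n) ℂ) :
    pdL (i :: L) p = pderiv i (pdL L p) := rfl

lemma pdL_append {n : ℕ} (A L : List (Fin n)) (p : MvPolynomial (Fin n) ℂ) :
    pdL (A ++ L) p = pdL A (pdL L p) := by
  induction A with
  | nil => simp
  | cons i A ih => simp [ih]

lemma pderiv_comm' {n : ℕ} (i j : Fin n) (p : MvPolynomial (Fin n) ℂ) :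
    pderiv i (pderiv j p) = pderiv j (pderiv i p) := by
  induction p using MvPolynomial.induction_on' with
  | add p q hp hq => simp [hp, hq]
  | monomial s a =>
    rcases eq_or_ne i j with rfl | hij
    · rfl
    · simp only [pderiv_monomial]
      simp [Finsupp.sub_apply, Finsupp.single_apply, hij, Ne.symm hij, tsub_right_comm]
      ring_nf

lemma pderiv_pdL {n : ℕ} (i : Fin n) (A : List (Fin n)) (p : MvPolynomial (Fin n) ℂ) :
    pderiv i (pdL A p) = pdL A (pderiv i p) := by
  induction A with
  | nil => rfl
  | cons j A ih =>
    simp only [pdL_cons]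
    rw [pderiv_comm', ih]

lemma lap_pdL {n : ℕ} (L : List (Fin n)) (p : MvPolynomial (Fin n) ℂ) :
    lap (pdL L p) = pdL L (lap p) := by
  simp only [lap, pderiv_pdL]
  rw [← map_sum]

lemma lap_mul {n : ℕ} (u v : MvPolynomial (Fin n) ℂ) :
    lap (u * v) = lap u * v + u * lap v + 2 * ∑ i, pderiv i u * pderiv i v := by
  have h : ∀ i : Fin n, pderiv i (pderiv i (u * v)) =
      pderiv i (pderiv i u) * v + u * pderiv i (pderiv i v) + 2 * (pderiv i u * pderiv i v) := by
    intro i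
    simp only [pderiv_mul, map_add]
    ring
  simp only [lap, h, Finset.sum_add_distrib, Finset.sum_mul, Finset.mul_sum]

lemma pdL_monomial_zero {n : ℕ} :
    ∀ (L : List (Fin n)) (s : Fin n →₀ ℕ) (a : ℂ),
      (s.sum fun _ e => e) < L.length → pdL L (monomial s a) = 0 := by
  intro L
  induction L with
  | nil => intro s a h; simp at h
  | cons i L ih =>
    intro s a h
    simp only [pdL_cons, pderiv_pdL, pderiv_monomial]
    rcases Nat.eq_zero_or_pos (s i) with hz | hpos
    · simp [hz]
    · rw [ih]
      have hle : Finsupp.single i 1 ≤ s := by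
        rw [Finsupp.single_le_iff]; exact hpos
      have hsum : ((s - Finsupp.single i 1).sum fun _ e => e) + 1 = s.sum fun _ e => e := by
        conv_rhs => rw [← tsub_add_cancel_of_le hle]
        rw [Finsupp.sum_add_index' (fun _ => rfl) (fun _ _ _ => rfl),
          Finsupp.sum_single_index rfl]
      simp only [List.length_cons] at h
      omega

lemma pdL_zero_of_totalDegree_lt {n : ℕ} (L : List (Fin n)) (p : MvPolynomial (Fin n) ℂ)
    (h : p.totalDegree < L.length) : pdL L p = 0 := by
  conv_lhs => rw [← support_sum_monomial_coeff p]
  rw [map_sum]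
  refine Finset.sum_eq_zero fun s hs => ?_
  exact pdL_monomial_zero L s _ (lt_of_le_of_lt (le_totalDegree hs) h)

/-- generators for the span containing `lap^[m] (f*g)` -/
def gens {n : ℕ} (f g : MvPolynomial (Fin n) ℂ) (m : ℕ) : Set (MvPolynomial (Fin n) ℂ) :=
  {x | ∃ (k1 k3 : ℕ) (A L : List (Fin n)), A.length = 2 * k1 ∧ k1 + L.length + k3 = m ∧
    x = pdL (A ++ L) f * pdL L (lap^[k3] g)}

lemma key_span {n : ℕ} (f g : MvPolynomial (Fin n) ℂ) :
    ∀ m : ℕ, lap^[m] (f * g) ∈ Submodule.span ℂ (gens f g m) := by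
  intro m
  induction m with
  | zero =>
    exact Submodule.subset_span ⟨0, 0, [], [], rfl, rfl, by simp⟩
  | succ m ih =>
    rw [Function.iterate_succ_apply', ← lapL_apply]
    refine Submodule.span_induction
      (p := fun x _ => lapL x ∈ Submodule.span ℂ (gens f g (m + 1))) ?_ ?_ ?_ ?_ ih
    · rintro x ⟨k1, k3, A, L, hA, hsum, rfl⟩
      rw [lapL_apply, lap_mul]
      refine Submodule.add_mem _ (Submodule.add_mem _ ?_ ?_) ?_
      · -- lap u * v
        have : lap (pdL (A ++ L) f) * pdL L (lap^[k3] g)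
            = ∑ i : Fin n, pdL ((i :: i :: A) ++ L) f * pdL L (lap^[k3] g) := by
          simp only [lap, Finset.sum_mul]
          rfl
        rw [this]
        refine Submodule.sum_mem _ fun i _ => Submodule.subset_span
          ⟨k1 + 1, k3, i :: i :: A, L, by simp [hA]; ring, by omega, rfl⟩
      · -- u * lap v
        rw [lap_pdL, ← Function.iterate_succ_apply' lap]
        exact Submodule.subset_span ⟨k1, k3 + 1, A, L, hA, by omega, rfl⟩
      · -- cross terms
        have hsplit : (2 : MvPolynomial (Fin n) ℂ) * ∑ i : Fin n,
            pderiv i (pdL (A ++ L) f) * pderiv i (pdL L (lap^[k3] g))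
            = (∑ i : Fin n, pdL (A ++ (i :: L)) f * pdL (i :: L) (lap^[k3] g))
              + ∑ i : Fin n, pdL (A ++ (i :: L)) f * pdL (i :: L) (lap^[k3] g) := by
          rw [two_mul]
          congr 1 <;>
          · refine Finset.sum_congr rfl fun i _ => ?_
            have hf : pdL (A ++ (i :: L)) f = pderiv i (pdL (A ++ L) f) := by
              rw [pdL_append, pdL_cons, ← pderiv_pdL, ← pdL_append]
            rw [hf, pdL_cons]
        rw [hsplit]
        have hmem : ∑ i : Fin n, pdL (A ++ (i :: L)) f * pdL (i :: L) (lap^[k3] g) ∈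
            Submodule.span ℂ (gens f g (m + 1)) :=
          Submodule.sum_mem _ fun i _ => Submodule.subset_span
            ⟨k1, k3, A, i :: L, hA, by simp at hsum ⊢; omega, rfl⟩
        exact Submodule.add_mem _ hmem hmem
    · simp
    · intro x y _ _ hx hy
      rw [map_add]; exact Submodule.add_mem _ hx hy
    · intro c x _ hx
      rw [map_smul]; exact Submodule.smul_mem _ _ hx

/-- If `Δ^m P^{m+a} = 0` for `m >> 0` for each fixed `a ≥ 1`, and `Δ^m P^m = 0` for all
`m ≥ 1`, then for any polynomial `f` we have `Δ^m (f P^m) = 0` for `m >> 0`. -/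
theorem vanishing_with_factor {n : ℕ} (P : MvPolynomial (Fin n) ℂ)
    (h1 : ∀ a : ℕ, 1 ≤ a → ∃ N : ℕ, ∀ m > N, lap^[m] (P ^ (m + a)) = 0)
    (h2 : ∀ m : ℕ, 1 ≤ m → lap^[m] (P ^ m) = 0) :
    ∀ f : MvPolynomial (Fin n) ℂ, ∃ M : ℕ, ∀ m > M, lap^[m] (f * P ^ m) = 0 := by
  intro f
  set d := f.totalDegree with hd
  have h1' : ∀ a : ℕ, ∃ N : ℕ, ∀ m > N, lap^[m] (P ^ (m + (a + 1))) = 0 :=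
    fun a => h1 (a + 1) (by omega)
  choose Nf hNf using h1'
  refine ⟨d + (Finset.range (d + 1)).sup Nf + 1, fun m hm => ?_⟩
  have hkey := key_span f (P ^ m) m
  have hgen : gens f (P ^ m) m ⊆ {0} := by
    rintro x ⟨k1, k3, A, L, hA, hsum, rfl⟩
    by_cases hdeg : d < 2 * k1 + L.length
    · have : pdL (A ++ L) f = 0 := by
        apply pdL_zero_of_totalDegree_lt
        simp [hA]; omega
      simp [this]
    · push_neg at hdeg
      set b := k1 + L.length with hb
      have hbd : b ≤ d := by omega
      have hk3 : k3 = m - b := by omega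
      rcases Nat.eq_zero_or_pos b with hb0 | hb1
      · -- b = 0 : k1 = 0, L = []
        have hk1 : k1 = 0 := by omega
        have hL : L.length = 0 := by omega
        have : lap^[k3] (P ^ m) = 0 := by
          have : k3 = m := by omega
          subst this
          exact h2 k3 (by omega)
        simp [this]
      · -- b ≥ 1
        have hNb : Nf (b - 1) ≤ (Finset.range (d + 1)).sup Nf :=
          Finset.le_sup (Finset.mem_range.mpr (by omega))
        have hpow : P ^ m = P ^ (k3 + ((b - 1) + 1)) := by
          congr 1; omega
        have hz : lap^[k3] (P ^ m) = 0 := by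
          rw [hpow]
          exact hNf (b - 1) k3 (by omega)
        simp [hz]
  have : Submodule.span ℂ (gens f (P ^ m) m) ≤ ⊥ := by
    rw [Submodule.span_le]
    intro x hx
    simp [Set.mem_singleton_iff.mp (hgen hx)]
  simpa using this hkey
end
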